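/- Let (t, χ) be a tree decomposition of the constraint family C, and let home be a function assigning to each constraint (e, R) of C a node v of t with e ⊆ χ(v). For a non-root node v with parent p, write α(v) = χ(v) ∩ χ(p), and set α(root) = ∅. Define recursively, for each node v and each function τ : α(v) → A, the quantity cnt(v, τ) as the sum, over all functions b : χ(v) → A with b|α(v) = τ that satisfy every constraint homed at v, of the product over the children c of v of cnt(c, b|α(c)). Then cnt(root, ∅) equals the total number of solutions of C. -/

import Mathlib

open scoped Classical

/-- A constraint over variables `V` and values `A`: a scope `e ⊆ V` together with a
set of functions from `e` to `A`. -/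
structure Constraint (V A : Type) where
  scope : Finset V
  rel : Set ({x // x ∈ scope} → A)

/-- Restriction of a function defined on `t` to a subset `s ⊆ t`. -/
def restrict {V A : Type} {s t : Finset V} (h : s ⊆ t) (g : {x // x ∈ t} → A) :
    {x // x ∈ s} → A :=
  fun x => g ⟨x.1, h x.2⟩

/-- Restriction of a total function `f : V → A` to a subset `s ⊆ V`. -/
def restrictF {V A : Type} (f : V → A) (s : Finset V) : {x // x ∈ s} → A :=
  fun x => f x.1

/-- `f` is a solution of the family of constraints `C`: for every constraint,
the restriction of `f` to its scope belongs to its relation. -/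
def IsSolution {V A ι : Type} (C : ι → Constraint V A) (f : V → A) : Prop :=
  ∀ i, restrictF f (C i).scope ∈ (C i).rel


/-- In a rooted tree given by a parent function, `u` is an ancestor of `w`
(possibly `u = w`) if `u` is obtained from `w` by iterating `parent`. -/
def IsAncestor {m : ℕ} (parent : Fin m → Fin m) (u w : Fin m) : Prop :=
  ∃ n : ℕ, parent^[n] w = u

/-- `z` lies on the unique path between `u` and `w` in the rooted tree given by
`parent`. -/
def OnPath {m : ℕ} (parent : Fin m → Fin m) (u w z : Fin m) : Prop :=
  (IsAncestor parent z u ∨ IsAncestor parent z w) ∧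
    ∀ c, IsAncestor parent c u → IsAncestor parent c w → IsAncestor parent c z

/-- The children of a node `v` in the rooted tree given by `parent` (the root `0` is
nobody's child). -/
def treeChildren {m : ℕ} [NeZero m] (parent : Fin m → Fin m) (v : Fin m) : Finset (Fin m) :=
  Finset.univ.filter fun c => parent c = v ∧ c ≠ 0

/-- The adhesion of a node: `χ(v) ∩ χ(parent v)` for a non-root node, `∅` for the
root. -/
def adhesion {V : Type} [DecidableEq V] {m : ℕ} [NeZero m] (parent : Fin m → Fin m)
    (χ : Fin m → Finset V) (v : Fin m) : Finset V :=
  if v = 0 then ∅ else χ v ∩ χ (parent v)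

theorem adhesion_subset {V : Type} [DecidableEq V] {m : ℕ} [NeZero m] (parent : Fin m → Fin m)
    (χ : Fin m → Finset V) (v : Fin m) : adhesion parent χ v ⊆ χ v := by
  unfold adhesion
  split
  · exact Finset.empty_subset _
  · exact Finset.inter_subset_left

theorem adhesion_child_subset {V : Type} [DecidableEq V] {m : ℕ} [NeZero m]
    (parent : Fin m → Fin m) (χ : Fin m → Finset V) {c v : Fin m}
    (h1 : parent c = v) (h2 : c ≠ 0) : adhesion parent χ c ⊆ χ v := by
  unfold adhesion
  rw [if_neg h2, h1]
  exact Finset.inter_subset_right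

/-- The recursively defined count `cnt(v, τ)`: the sum, over assignments
`b : χ(v) → A` extending `τ` (given on the adhesion of `v`) that satisfy every
constraint homed at `v`, of the product over the children `c` of `v` of
`cnt(c, b|α(c))`. -/
noncomputable def cnt {V A ι : Type} [Fintype V] [DecidableEq V] [Fintype A] [Fintype ι]
    (C : ι → Constraint V A) {m : ℕ} [NeZero m]
    (parent : Fin m → Fin m) (hpar : ∀ i : Fin m, i ≠ 0 → parent i < i)
    (χ : Fin m → Finset V) (home : ι → Fin m)
    (hhome : ∀ j, (C j).scope ⊆ χ (home j))
    (v : Fin m) (τ : {x // x ∈ adhesion parent χ v} → A) : ℕ :=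
  ∑ b : {x // x ∈ χ v} → A,
    if restrict (adhesion_subset parent χ v) b = τ ∧
        (∀ j, ∀ hj : home j = v, restrict (show (C j).scope ⊆ χ v by rw [← hj]; exact hhome j) b ∈ (C j).rel) then
      ∏ c ∈ (treeChildren parent v).attach,
        cnt C parent hpar χ home hhome c.1
          (restrict (adhesion_child_subset parent χ
            (Finset.mem_filter.mp c.2).2.1 (Finset.mem_filter.mp c.2).2.2) b)
    else 0
termination_by m - v.1
decreasing_by
  have hc := (Finset.mem_filter.mp c.2).2
  have hlt : v < c.1 := by
    have h0 := hpar c.1 hc.2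
    rwa [hc.1] at h0
  omega

set_option linter.unusedSectionVars false

section Tree

variable {m : ℕ} [NeZero m] {parent : Fin m → Fin m}

noncomputable def subtree (parent : Fin m → Fin m) (v : Fin m) : Finset (Fin m) :=
  Finset.univ.filter fun w => IsAncestor parent v w

lemma mem_subtree {v w : Fin m} : w ∈ subtree parent v ↔ IsAncestor parent v w := by
  simp [subtree]

lemma self_mem_subtree (v : Fin m) : v ∈ subtree parent v := mem_subtree.2 ⟨0, rfl⟩

lemma isAncestor_trans {u v w : Fin m} (h1 : IsAncestor parent u v)
    (h2 : IsAncestor parent v w) : IsAncestor parent u w := by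
  obtain ⟨a, ha⟩ := h1; obtain ⟨b, hb⟩ := h2
  exact ⟨a + b, by rw [Function.iterate_add_apply, hb, ha]⟩

lemma mem_children_iff {v c : Fin m} :
    c ∈ treeChildren parent v ↔ parent c = v ∧ c ≠ 0 := by
  simp [treeChildren]

variable (hroot : parent 0 = 0) (hpar : ∀ i : Fin m, i ≠ 0 → parent i < i)

include hroot hpar

lemma parent_le (u : Fin m) : parent u ≤ u := by
  by_cases h : u = 0
  · subst h; rw [hroot]
  · exact (hpar u h).le

lemma iterate_le (n : ℕ) (w : Fin m) : parent^[n] w ≤ w := by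
  induction n generalizing w with
  | zero => simp
  | succ n ih =>
    rw [Function.iterate_succ_apply]
    exact (ih (parent w)).trans (parent_le hroot hpar w)

lemma iterate_eq_zero : ∀ (n : ℕ) (w : Fin m), w.1 ≤ n → parent^[n] w = 0 := by
  intro n
  induction n with
  | zero =>
    intro w hw
    have : w = 0 := Fin.ext (Nat.le_zero.mp hw)
    simp [this]
  | succ n ih =>
    intro w hw
    by_cases h : w = 0
    · subst h; exact Function.iterate_fixed hroot _
    · rw [Function.iterate_succ_apply]
      exact ih (parent w) (by have := hpar w h; omega)

lemma root_ancestor (w : Fin m) : IsAncestor parent 0 w :=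
  ⟨w.1, iterate_eq_zero hroot hpar w.1 w le_rfl⟩

lemma child_gt {v c : Fin m} (hc : c ∈ treeChildren parent v) : v < c := by
  obtain ⟨h1, h2⟩ := mem_children_iff.mp hc
  have := hpar c h2; rwa [h1] at this

lemma not_mem_subtree_child {v c : Fin m} (hc : c ∈ treeChildren parent v) :
    v ∉ subtree parent c := by
  intro hv
  obtain ⟨n, hn⟩ := mem_subtree.mp hv
  have h1 : parent^[n] v ≤ v := iterate_le hroot hpar n v
  have h2 := child_gt hroot hpar hc
  rw [hn] at h1
  exact absurd (h1.trans_lt h2) (lt_irrefl c)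

lemma subtree_cases {v w : Fin m} (hw : w ∈ subtree parent v) :
    w = v ∨ ∃ c, c ∈ treeChildren parent v ∧ w ∈ subtree parent c := by
  obtain ⟨n, hn⟩ := mem_subtree.mp hw
  clear hw
  induction n generalizing w with
  | zero => exact Or.inl hn
  | succ n ih =>
    rw [Function.iterate_succ_apply] at hn
    rcases ih hn with h | ⟨c, hc, hwc⟩
    · by_cases hw0 : w = 0
      · subst hw0
        rw [hroot] at h
        exact Or.inl h
      · exact Or.inr ⟨w, mem_children_iff.2 ⟨h, hw0⟩, self_mem_subtree w⟩
    · obtain ⟨k, hk⟩ := mem_subtree.mp hwc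
      exact Or.inr ⟨c, hc, mem_subtree.2 ⟨k + 1, by
        rwa [Function.iterate_succ_apply]⟩⟩

lemma mem_subtree_child {v c w : Fin m} (hc : c ∈ treeChildren parent v)
    (hw : w ∈ subtree parent c) : w ∈ subtree parent v := by
  obtain ⟨h1, _⟩ := mem_children_iff.mp hc
  exact mem_subtree.2 (isAncestor_trans ⟨1, by simp [h1]⟩ (mem_subtree.mp hw))

-- comparability of two ancestors of the same node
lemma ancestor_comparable' {w z₁ z₂ : Fin m} (h1 : IsAncestor parent z₁ w)
    (h2 : IsAncestor parent z₂ w) :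
    IsAncestor parent z₁ z₂ ∨ IsAncestor parent z₂ z₁ := by
  obtain ⟨a, ha⟩ := h1; obtain ⟨b, hb⟩ := h2
  rcases le_total a b with h | h
  · right
    refine ⟨b - a, ?_⟩
    rw [← ha, ← Function.iterate_add_apply, Nat.sub_add_cancel h, hb]
  · left
    refine ⟨a - b, ?_⟩
    rw [← hb, ← Function.iterate_add_apply, Nat.sub_add_cancel h, ha]

lemma subtree_children_disjoint {v c₁ c₂ w : Fin m}
    (h1 : c₁ ∈ treeChildren parent v) (h2 : c₂ ∈ treeChildren parent v)
    (hw1 : w ∈ subtree parent c₁) (hw2 : w ∈ subtree parent c₂) : c₁ = c₂ := by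
  have key : ∀ c₁ c₂ : Fin m, c₁ ∈ treeChildren parent v → c₂ ∈ treeChildren parent v →
      IsAncestor parent c₁ c₂ → c₁ = c₂ := by
    intro c₁ c₂ hc1 hc2 ⟨n, hn⟩
    cases n with
    | zero => exact hn.symm
    | succ n =>
      exfalso
      rw [Function.iterate_succ_apply, (mem_children_iff.mp hc2).1] at hn
      have h1 : parent^[n] v ≤ v := iterate_le hroot hpar n v
      rw [hn] at h1
      exact absurd (h1.trans_lt (child_gt hroot hpar hc1)) (lt_irrefl c₁)
  rcases ancestor_comparable' hroot hpar (mem_subtree.mp hw1) (mem_subtree.mp hw2) with h | h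
  · exact key c₁ c₂ h1 h2 h
  · exact (key c₂ c₁ h2 h1 h).symm

end Tree

section Sep

variable {V : Type} [DecidableEq V] {m : ℕ} [NeZero m] {parent : Fin m → Fin m}
  {χ : Fin m → Finset V}

noncomputable def bigBag (parent : Fin m → Fin m) (χ : Fin m → Finset V) (v : Fin m) :
    Finset V :=
  (subtree parent v).biUnion χ

lemma mem_bigBag {v : Fin m} {x : V} :
    x ∈ bigBag parent χ v ↔ ∃ w ∈ subtree parent v, x ∈ χ w := by
  simp [bigBag]

lemma chi_subset_bigBag (v : Fin m) : χ v ⊆ bigBag parent χ v := fun x hx =>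
  mem_bigBag.2 ⟨v, self_mem_subtree v, hx⟩

lemma bigBag_subset {v w : Fin m} (h : w ∈ subtree parent v) :
    bigBag parent χ w ⊆ bigBag parent χ v := fun x hx => by
  obtain ⟨u, hu, hxu⟩ := mem_bigBag.mp hx
  exact mem_bigBag.2 ⟨u, mem_subtree.2 (isAncestor_trans (mem_subtree.mp h) (mem_subtree.mp hu)), hxu⟩

variable (hroot : parent 0 = 0) (hpar : ∀ i : Fin m, i ≠ 0 → parent i < i)
  (hconn : ∀ (x : V) (u w z : Fin m), x ∈ χ u → x ∈ χ w → OnPath parent u w z → x ∈ χ z)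

include hroot hpar hconn

/-- Key separation lemma: a variable appearing both inside the subtree of a child `c`
and outside of it must lie in the adhesion of `c`. -/
lemma sep_lemma {v c : Fin m} (hc : c ∈ treeChildren parent v) {x : V} {u w : Fin m}
    (hu : u ∈ subtree parent c) (hxu : x ∈ χ u)
    (hw : w ∉ subtree parent c) (hxw : x ∈ χ w) :
    x ∈ adhesion parent χ c := by
  obtain ⟨hpc, hc0⟩ := mem_children_iff.mp hc
  -- dichotomy for common ancestors of u and w
  have dich : ∀ z : Fin m, IsAncestor parent z u → IsAncestor parent z w →
      z ≠ c ∧ IsAncestor parent z c := by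
    intro z hzu hzw
    rcases ancestor_comparable' hroot hpar hzu (mem_subtree.mp hu) with h | h
    · refine ⟨?_, h⟩
      rintro rfl
      exact hw (mem_subtree.2 hzw)
    · -- z ∈ subtree c : contradiction since then w ∈ subtree c
      exact absurd (mem_subtree.2 (isAncestor_trans h hzw)) hw
  have hxc : x ∈ χ c := by
    refine hconn x u w c hxu hxw ⟨Or.inl (mem_subtree.mp hu), ?_⟩
    intro z hzu hzw
    exact (dich z hzu hzw).2
  have hxv : x ∈ χ v := by
    refine hconn x u w v hxu hxw ⟨Or.inl (isAncestor_trans ⟨1, by simp [hpc]⟩ (mem_subtree.mp hu)), ?_⟩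
    intro z hzu hzw
    obtain ⟨hne, k, hk⟩ := dich z hzu hzw
    cases k with
    | zero => exact absurd hk.symm hne
    | succ k =>
      rw [Function.iterate_succ_apply, hpc] at hk
      exact ⟨k, hk⟩
  unfold adhesion
  rw [if_neg hc0, hpc]
  exact Finset.mem_inter.2 ⟨hxc, hxv⟩

lemma bigBag_inter_chi {v c : Fin m} (hc : c ∈ treeChildren parent v) {x : V}
    (h1 : x ∈ bigBag parent χ c) (h2 : x ∈ χ v) : x ∈ adhesion parent χ c := by
  obtain ⟨u, hu, hxu⟩ := mem_bigBag.mp h1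
  exact sep_lemma hroot hpar hconn hc hu hxu (not_mem_subtree_child hroot hpar hc) h2

lemma bigBag_inter_bigBag {v c₁ c₂ : Fin m} (hc1 : c₁ ∈ treeChildren parent v)
    (hc2 : c₂ ∈ treeChildren parent v) (hne : c₁ ≠ c₂) {x : V}
    (h1 : x ∈ bigBag parent χ c₁) (h2 : x ∈ bigBag parent χ c₂) :
    x ∈ adhesion parent χ c₁ := by
  obtain ⟨u, hu, hxu⟩ := mem_bigBag.mp h1
  obtain ⟨w, hw, hxw⟩ := mem_bigBag.mp h2
  have hwnot : w ∉ subtree parent c₁ := fun hmem =>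
    hne (subtree_children_disjoint hroot hpar hc1 hc2 hmem hw)
  exact sep_lemma hroot hpar hconn hc1 hu hxu hwnot hxw

end Sep

section Good

variable {V A ι : Type} [Fintype V] [DecidableEq V] [Fintype A] [Fintype ι]

/-- The set of partial solutions on the union of bags of the subtree of `v`,
extending `τ` on the adhesion of `v`, and satisfying all constraints homed in the
subtree of `v`. -/
noncomputable def good (C : ι → Constraint V A) {m : ℕ} [NeZero m]
    (parent : Fin m → Fin m) (χ : Fin m → Finset V) (home : ι → Fin m)
    (hhome : ∀ j, (C j).scope ⊆ χ (home j))
    (v : Fin m) (τ : {x // x ∈ adhesion parent χ v} → A) :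
    Finset ({x // x ∈ bigBag parent χ v} → A) :=
  Finset.univ.filter fun g =>
    restrict ((adhesion_subset parent χ v).trans (chi_subset_bigBag v)) g = τ ∧
    ∀ j, ∀ hj : home j ∈ subtree parent v,
      restrict ((hhome j).trans (fun x hx => mem_bigBag.2 ⟨home j, hj, hx⟩)) g ∈ (C j).rel

lemma mem_good {C : ι → Constraint V A} {m : ℕ} [NeZero m]
    {parent : Fin m → Fin m} {χ : Fin m → Finset V} {home : ι → Fin m}
    {hhome : ∀ j, (C j).scope ⊆ χ (home j)}
    {v : Fin m} {τ : {x // x ∈ adhesion parent χ v} → A}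
    {g : {x // x ∈ bigBag parent χ v} → A} :
    g ∈ good C parent χ home hhome v τ ↔
      restrict ((adhesion_subset parent χ v).trans (chi_subset_bigBag v)) g = τ ∧
      ∀ j, ∀ hj : home j ∈ subtree parent v,
        restrict ((hhome j).trans (fun x hx => mem_bigBag.2 ⟨home j, hj, hx⟩)) g ∈ (C j).rel := by
  simp [good]

lemma restrict_eq_of_forall {s t : Finset V} (h h' : s ⊆ t) (g g' : {x // x ∈ t} → A)
    (heq : ∀ x : {x // x ∈ s}, g ⟨x.1, h x.2⟩ = g' ⟨x.1, h' x.2⟩) :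
    restrict h g = restrict h' g' := funext fun x => heq x

end Good

section MainLemma

variable {V A ι : Type} [Fintype V] [DecidableEq V] [Fintype A] [Fintype ι]

/-- Glue a function `b` on `χ v` with functions on the big bags of the children. -/
noncomputable def glue {m : ℕ} [NeZero m]
    (parent : Fin m → Fin m) (χ : Fin m → Finset V) (v : Fin m)
    (b : {x // x ∈ χ v} → A)
    (p : ∀ c : {c // c ∈ treeChildren parent v}, {x // x ∈ bigBag parent χ c.1} → A)
    (hcov : ∀ x : V, x ∈ bigBag parent χ v → x ∉ χ v →
      ∃ c : {c // c ∈ treeChildren parent v}, x ∈ bigBag parent χ c.1) :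
    {x // x ∈ bigBag parent χ v} → A :=
  fun x =>
    if h : x.1 ∈ χ v then b ⟨x.1, h⟩
    else p (hcov x.1 x.2 h).choose ⟨x.1, (hcov x.1 x.2 h).choose_spec⟩

lemma cnt_eq_card (C : ι → Constraint V A) {m : ℕ} [NeZero m]
    (parent : Fin m → Fin m) (χ : Fin m → Finset V)
    (hroot : parent 0 = 0) (hpar : ∀ i : Fin m, i ≠ 0 → parent i < i)
    (hconn : ∀ (x : V) (u w z : Fin m), x ∈ χ u → x ∈ χ w → OnPath parent u w z → x ∈ χ z)
    (home : ι → Fin m) (hhome : ∀ j, (C j).scope ⊆ χ (home j)) :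
    ∀ (k : ℕ) (v : Fin m), m - v.1 ≤ k → ∀ (τ : {x // x ∈ adhesion parent χ v} → A),
      cnt C parent hpar χ home hhome v τ = (good C parent χ home hhome v τ).card := by
  intro k
  induction k with
  | zero => intro v hk τ; exact absurd hk (by have := v.2; omega)
  | succ k ih =>
    intro v hk τ
    rw [cnt]
    rw [Finset.card_eq_sum_card_fiberwise
      (f := fun g => restrict (chi_subset_bigBag v) g) (t := Finset.univ)
      (fun x _ => Finset.mem_univ _)]
    refine Finset.sum_congr rfl fun b _ => ?_
    split_ifs with hb
    · -- the main case
      obtain ⟨hb1, hb2⟩ := hb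
      have hchild : ∀ c : Fin m, c ∈ treeChildren parent v → m - c.1 ≤ k := by
        intro c hc
        have h1 := child_gt hroot hpar hc
        have h2 := c.2
        have h3 : v.1 < c.1 := h1
        omega
      have hstep : ∀ c ∈ (treeChildren parent v).attach,
          cnt C parent hpar χ home hhome c.1
            (restrict (adhesion_child_subset parent χ
              (Finset.mem_filter.mp c.2).2.1 (Finset.mem_filter.mp c.2).2.2) b)
          = (good C parent χ home hhome c.1
            (restrict (adhesion_child_subset parent χ
              (Finset.mem_filter.mp c.2).2.1 (Finset.mem_filter.mp c.2).2.2) b)).card :=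
        fun c _ => ih c.1 (hchild c.1 c.2) _
      rw [Finset.prod_congr rfl hstep, ← Finset.univ_eq_attach, ← Fintype.card_piFinset]
      -- now a bijection between the pi-set and the fiber
      have hsub : ∀ c : {c // c ∈ treeChildren parent v},
          bigBag parent χ c.1 ⊆ bigBag parent χ v :=
        fun c => bigBag_subset (mem_subtree_child hroot hpar c.2 (self_mem_subtree c.1))
      have hcov : ∀ x : V, x ∈ bigBag parent χ v → x ∉ χ v →
          ∃ c : {c // c ∈ treeChildren parent v}, x ∈ bigBag parent χ c.1 := by
        intro x hx hxv
        obtain ⟨w, hw, hxw⟩ := mem_bigBag.mp hx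
        rcases subtree_cases hroot hpar hw with rfl | ⟨c, hc, hwc⟩
        · exact absurd hxw hxv
        · exact ⟨⟨c, hc⟩, mem_bigBag.2 ⟨w, hwc, hxw⟩⟩
      have hglue_val : ∀ p hcov', ∀ (x : {x // x ∈ bigBag parent χ v}) (hx : x.1 ∈ χ v),
          glue parent χ v b p hcov' x = b ⟨x.1, hx⟩ := by
        intro p hcov' x hx
        simp only [glue]
        rw [dif_pos hx]
      have hag : ∀ (p : ∀ c : {c // c ∈ treeChildren parent v},
            {x // x ∈ bigBag parent χ c.1} → A),
          (∀ c, p c ∈ good C parent χ home hhome c.1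
            (restrict (adhesion_child_subset parent χ
              (mem_children_iff.mp c.2).1 (mem_children_iff.mp c.2).2) b)) →
          ∀ (c : {c // c ∈ treeChildren parent v}) (x : V) (hx : x ∈ bigBag parent χ c.1),
            glue parent χ v b p hcov ⟨x, hsub c hx⟩ = p c ⟨x, hx⟩ := by
        intro p hp c x hx
        by_cases h : x ∈ χ v
        · rw [hglue_val p hcov ⟨x, hsub c hx⟩ h]
          have hxadh : x ∈ adhesion parent χ c.1 :=
            bigBag_inter_chi hroot hpar hconn c.2 hx h
          have := congrFun (mem_good.mp (hp c)).1 ⟨x, hxadh⟩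
          exact this.symm
        · simp only [glue]
          rw [dif_neg h]
          have hce : (hcov x (hsub c hx) h).choose = c := by
            by_contra hne
            have hne' : ((hcov x (hsub c hx) h).choose : Fin m) ≠ c.1 :=
              fun he => hne (Subtype.ext he)
            have hadh := bigBag_inter_bigBag hroot hpar hconn
              (hcov x (hsub c hx) h).choose.2 c.2 hne'
              (hcov x (hsub c hx) h).choose_spec hx
            exact h (adhesion_child_subset parent χ
              (mem_children_iff.mp (hcov x (hsub c hx) h).choose.2).1
              (mem_children_iff.mp (hcov x (hsub c hx) h).choose.2).2 hadh)
          have key : ∀ (d : {c // c ∈ treeChildren parent v})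
              (hd : x ∈ bigBag parent χ d.1), d = c → p d ⟨x, hd⟩ = p c ⟨x, hx⟩ := by
            rintro d hd rfl; rfl
          exact key _ _ hce
      symm
      refine Finset.card_bij'
        (fun g _ => fun c => restrict (hsub c) g)
        (fun p _ => glue parent χ v b p hcov) ?_ ?_ ?_ ?_
      · -- restriction lands in the pi-set
        intro g hg
        rw [Finset.mem_filter] at hg
        obtain ⟨hgood, hgb⟩ := hg
        obtain ⟨hg1, hg2⟩ := mem_good.mp hgood
        rw [Fintype.mem_piFinset]
        intro c
        rw [mem_good]
        constructor
        · funext x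
          have hxχ : x.1 ∈ χ v := adhesion_child_subset parent χ
            (mem_children_iff.mp c.2).1 (mem_children_iff.mp c.2).2 x.2
          exact congrFun hgb ⟨x.1, hxχ⟩
        · intro j hj
          exact hg2 j (mem_subtree_child hroot hpar c.2 hj)
      · -- glue lands in the fiber
        intro p hp
        have hp' : ∀ c, p c ∈ good C parent χ home hhome c.1
            (restrict (adhesion_child_subset parent χ
              (mem_children_iff.mp c.2).1 (mem_children_iff.mp c.2).2) b) :=
          fun c => Fintype.mem_piFinset.mp hp c
        rw [Finset.mem_filter]
        constructor
        · rw [mem_good]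
          constructor
          · funext x
            have hxχ : x.1 ∈ χ v := adhesion_subset parent χ v x.2
            exact (hglue_val p hcov _ hxχ).trans (congrFun hb1 ⟨x.1, x.2⟩)
          · intro j hj
            rcases subtree_cases hroot hpar hj with hjv | ⟨c, hc, hjc⟩
            · have hscope : (C j).scope ⊆ χ v := by rw [← hjv]; exact hhome j
              have heq : restrict ((hhome j).trans fun x hx =>
                    mem_bigBag.2 ⟨home j, hj, hx⟩) (glue parent χ v b p hcov)
                  = restrict hscope b := by
                funext x
                exact hglue_val p hcov _ (hscope x.2)
              exact Set.mem_of_eq_of_mem heq (hb2 j hjv)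
            · have hscope : (C j).scope ⊆ bigBag parent χ c :=
                (hhome j).trans (fun x hx => mem_bigBag.2 ⟨home j, hjc, hx⟩)
              have heq : restrict ((hhome j).trans fun x hx =>
                    mem_bigBag.2 ⟨home j, hj, hx⟩) (glue parent χ v b p hcov)
                  = restrict hscope (p ⟨c, hc⟩) := by
                funext x
                exact hag p hp' ⟨c, hc⟩ x.1 (hscope x.2)
              exact Set.mem_of_eq_of_mem heq ((mem_good.mp (hp' ⟨c, hc⟩)).2 j hjc)
        · funext x
          exact hglue_val p hcov ⟨x.1, chi_subset_bigBag v x.2⟩ x.2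
      · -- right inverse
        intro g hg
        rw [Finset.mem_filter] at hg
        funext x
        by_cases h : x.1 ∈ χ v
        · exact (hglue_val (fun c => restrict (hsub c) g) hcov x h).trans
            (congrFun hg.2 ⟨x.1, h⟩).symm
        · simp only [glue]
          rw [dif_neg h]
          rfl
      · -- left inverse
        intro p hp
        have hp' : ∀ c, p c ∈ good C parent χ home hhome c.1
            (restrict (adhesion_child_subset parent χ
              (mem_children_iff.mp c.2).1 (mem_children_iff.mp c.2).2) b) :=
          fun c => Fintype.mem_piFinset.mp hp c
        funext c x
        exact hag p hp' c x.1 x.2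
    · -- degenerate case : the fiber is empty
      symm
      rw [Finset.card_eq_zero, Finset.filter_eq_empty_iff]
      intro g hg
      obtain ⟨hg1, hg2⟩ := mem_good.mp hg
      intro hgb
      apply hb
      subst hgb
      constructor
      · exact hg1
      · intro j hj
        exact hg2 j (by rw [hj]; exact self_mem_subtree v)

end MainLemma

/-- for a tree decomposition `(t, χ)` of `C` with a homing function for
the constraints, `cnt(root, ∅)` equals the total number of solutions of `C`. -/
theorem stmt8 {V A ι : Type} [Fintype V] [DecidableEq V] [Fintype A] [Fintype ι]
    (C : ι → Constraint V A)
    {m : ℕ} [NeZero m] (parent : Fin m → Fin m) (χ : Fin m → Finset V)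
    (hroot : parent 0 = 0)
    (hpar : ∀ i : Fin m, i ≠ 0 → parent i < i)
    (hcovV : ∀ x : V, ∃ u, x ∈ χ u)
    (hconn : ∀ (x : V) (u w z : Fin m), x ∈ χ u → x ∈ χ w →
      OnPath parent u w z → x ∈ χ z)
    (home : ι → Fin m) (hhome : ∀ j, (C j).scope ⊆ χ (home j)) :
    cnt C parent hpar χ home hhome 0
        (fun x =>
          absurd x.2 (by
            have : adhesion parent χ (0 : Fin m) = ∅ := by unfold adhesion; simp
            exact fun h => Finset.notMem_empty (x : V) (by rw [← this]; exact h))) =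
      Nat.card {f : V → A // IsSolution C f} := by
  rw [cnt_eq_card C parent χ hroot hpar hconn home hhome m 0 (Nat.sub_le m _)]
  rw [Nat.card_eq_fintype_card, Fintype.card_subtype]
  have hbag : ∀ x : V, x ∈ bigBag parent χ (0 : Fin m) := fun x => by
    obtain ⟨u, hu⟩ := hcovV x
    exact mem_bigBag.2 ⟨u, mem_subtree.2 (root_ancestor hroot hpar u), hu⟩
  refine Finset.card_bij'
    (fun g _ => fun x : V => g ⟨x, hbag x⟩)
    (fun f _ => fun x => f x.1) ?_ ?_ ?_ ?_
  · intro g hg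
    rw [Finset.mem_filter]
    refine ⟨Finset.mem_univ _, ?_⟩
    intro j
    exact (mem_good.mp hg).2 j (mem_subtree.2 (root_ancestor hroot hpar (home j)))
  · intro f hf
    rw [mem_good]
    constructor
    · funext x
      have h0 : adhesion parent χ (0 : Fin m) = (∅ : Finset V) := by unfold adhesion; simp
      exact absurd (h0 ▸ x.2) (Finset.notMem_empty x.1)
    · intro j hj
      exact (Finset.mem_filter.mp hf).2 j
  · intro g hg
    funext x
    rfl
  · intro f hf
    funext x
    rfl
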